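/- Let G be a finite group, |G| = p^k·m with gcd(p,m) = 1, and suppose for the word map w(x) = x^{p^k} it holds that every element of the image w(G) has exactly p^k preimages and |w(G)| = m. Then G has a normal Sylow p-subgroup. -/

import Mathlib

/-- Let `G` be a finite group of order `p^k · m` with
`gcd(p,m) = 1`. If every element of the image of the power word map
`w(x) = x^{p^k}` has exactly `p^k` preimages and the image has size `m`,
then `G` has a normal Sylow `p`-subgroup. -/
theorem stmt_15 (G : Type*) [Group G] [Finite G] (p k m : ℕ) (hp : p.Prime)
    (hcard : Nat.card G = p ^ k * m) (hcop : Nat.gcd p m = 1)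
    (hfib : ∀ g ∈ Set.range (fun x : G => x ^ (p ^ k)),
      Nat.card {x : G // x ^ (p ^ k) = g} = p ^ k)
    (himg : Nat.card (Set.range (fun x : G => x ^ (p ^ k))) = m) :
    ∃ P : Sylow p G, (P : Subgroup G).Normal := by
  haveI : Fact p.Prime := ⟨hp⟩
  have hm0 : m ≠ 0 := by
    rintro rfl
    simp [Nat.gcd_zero_right] at hcop
    exact hp.one_lt.ne' hcop
  have hpm : ¬ p ∣ m := (Nat.Prime.coprime_iff_not_dvd hp).mp hcop
  -- the set of solutions of x^{p^k} = 1
  have hS : Nat.card {x : G // x ^ (p ^ k) = 1} = p ^ k := by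
    apply hfib
    exact ⟨1, one_pow _⟩
  -- a Sylow p-subgroup
  obtain ⟨P⟩ := (inferInstance : Nonempty (Sylow p G))
  have hfac : (Nat.card G).factorization p = k := by
    rw [hcard, Nat.factorization_mul (pow_ne_zero _ hp.pos.ne') hm0, Nat.Prime.factorization_pow hp]
    simp [Nat.factorization_eq_zero_of_not_dvd hpm]
  have hPcard : Nat.card (P : Subgroup G) = p ^ k := by
    rw [Sylow.card_eq_multiplicity, hfac]
  -- P as a set equals the solution set
  set S : Set G := {x : G | x ^ (p ^ k) = 1} with hSdef
  have hsub : ((P : Subgroup G) : Set G) ⊆ S := by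
    intro x hx
    have : (⟨x, hx⟩ : (P : Subgroup G)) ^ (p ^ k) = 1 := by
      rw [← hPcard]
      exact pow_card_eq_one'
    exact (by simpa [SetLike.ext_iff, Subtype.ext_iff] using this : x ^ (p ^ k) = 1)
  have hScard : Nat.card S = p ^ k := hS
  have heq : ((P : Subgroup G) : Set G) = S := by
    apply Set.eq_of_subset_of_ncard_le hsub _ (Set.toFinite S)
    rw [← Nat.card_coe_set_eq, ← Nat.card_coe_set_eq, hScard]
    have : Nat.card ((P : Subgroup G) : Set G) = Nat.card (P : Subgroup G) := rfl
    rw [this, hPcard]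
  refine ⟨P, ⟨fun x hx g => ?_⟩⟩
  have hx1 : x ∈ S := heq ▸ hx
  have hx1 : x ^ (p ^ k) = 1 := hx1
  have : (g * x * g⁻¹) ^ (p ^ k) = 1 := by
    rw [conj_pow, hx1, mul_one, mul_inv_cancel]
  show g * x * g⁻¹ ∈ ((P : Subgroup G) : Set G)
  rw [heq]
  exact this
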